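/- Assume the partition of unity I = Σ_q R_q^T D_q R_q, the boundary condition yielding R_p A R_q^T D_q = R_p R_q^T A_q D_q R_q R_q^T (with A_q = R_q A R_q^T), and the compatibility identity (1). Then the local residual formula holds: for any u ∈ R^N and f ∈ R^N, R_p (f − A u) = Σ_{q=1}^P R_p R_q^T (D_q R_q f − A_q D_q R_q u). -/
import Mathlib


open Matrix BigOperators
open scoped Classical

/-- `R` is a Boolean restriction matrix: entries 0/1, exactly one 1 per row,
at most one 1 per column. -/
def IsRestriction {m n : ℕ} (R : Matrix (Fin m) (Fin n) ℝ) : Prop :=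
  (∀ i j, R i j = 0 ∨ R i j = 1) ∧
  (∀ i, ∃! j, R i j = 1) ∧
  (∀ j i i', R i j = 1 → R i' j = 1 → i = i')

/-- `D` is a diagonal Boolean matrix: diagonal with entries 0/1. -/
def IsDiagBool {n : ℕ} (D : Matrix (Fin n) (Fin n) ℝ) : Prop :=
  D.IsDiag ∧ ∀ i, D i i = 0 ∨ D i i = 1

lemma sum_mulVec' {ι m n : Type*} [Fintype n] (s : Finset ι) (M : ι → Matrix m n ℝ)
    (v : n → ℝ) : (∑ i ∈ s, M i) *ᵥ v = ∑ i ∈ s, M i *ᵥ v := by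
  induction s using Finset.cons_induction with
  | empty => simp
  | cons a s h ih => rw [Finset.sum_cons, Finset.sum_cons, Matrix.add_mulVec, ih]

/-- local residual formula. -/
theorem stmt5 (P N : ℕ) (Np : Fin P → ℕ) (A : Matrix (Fin N) (Fin N) ℝ)
    (R : ∀ p, Matrix (Fin (Np p)) (Fin N) ℝ)
    (D : ∀ p, Matrix (Fin (Np p)) (Fin (Np p)) ℝ)
    (hR : ∀ p, IsRestriction (R p)) (hD : ∀ p, IsDiagBool (D p))
    (hsum : ∑ q, (R q)ᵀ * D q * R q = (1 : Matrix (Fin N) (Fin N) ℝ))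
    (hcompat : ∀ p q, R p * A * (R q)ᵀ * D q
      = R p * (R q)ᵀ * (R q * A * (R q)ᵀ) * D q)
    (u f : Fin N → ℝ) (p : Fin P) :
    R p *ᵥ (f - A *ᵥ u)
      = ∑ q, (R p * (R q)ᵀ) *ᵥ
          (D q *ᵥ (R q *ᵥ f) - ((R q * A * (R q)ᵀ) * D q) *ᵥ (R q *ᵥ u)) := by
  have hf : f = (∑ q, (R q)ᵀ * D q * R q) *ᵥ f := by rw [hsum, Matrix.one_mulVec]
  have hu : u = (∑ q, (R q)ᵀ * D q * R q) *ᵥ u := by rw [hsum, Matrix.one_mulVec]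
  simp only [Matrix.mulVec_sub, Finset.sum_sub_distrib, Matrix.mulVec_mulVec]
  congr 1
  · conv_lhs => rw [hf, Matrix.mulVec_mulVec]
    rw [Matrix.mul_sum, sum_mulVec']
    refine Finset.sum_congr rfl fun q _ => ?_
    congr 1
    simp only [Matrix.mul_assoc]
  · conv_lhs => rw [hu, Matrix.mulVec_mulVec]
    rw [Matrix.mul_sum, sum_mulVec']
    refine Finset.sum_congr rfl fun q _ => ?_
    congr 1
    rw [← Matrix.mul_assoc, ← Matrix.mul_assoc, hcompat p q]
    simp only [Matrix.mul_assoc]
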